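/- For every finite simple directed graph G(V,E) in which every vertex has positive indegree, there exists a set S ⊆ V with c(S, G, φ^simple) = V and |S| ≤ ⌊|V|/2⌋; that is, the minimum size of an irreversible dynamo of G under the simple-majority scenario is at most ⌊|V|/2⌋. -/
import Mathlib


/-- The set of in-neighbors of `v` in the directed graph with adjacency
relation `A` (`A u v` means there is an edge from `u` to `v`). -/
def inNbr {V : Type*} (A : V → V → Prop) (v : V) : Set V := {u | A u v}

/-- `dClosure A ok S` is the least superset of `S` closed under the coloring
rule: a vertex `v` gets colored white as soon as the number `n` of its white
in-neighbors satisfies the threshold condition `ok v n`. -/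
def dClosure {V : Type*} (A : V → V → Prop) (ok : V → ℕ → Prop) (S : Set V) : Set V :=
  ⋂₀ {T : Set V | S ⊆ T ∧ ∀ v, ok v ((inNbr A v ∩ T).ncard) → v ∈ T}

/-- The simple-majority threshold `φ^simple(v) = ⌈deg^in(v)/2⌉`:
`v` is colored white when at least half of its in-neighbors are white,
i.e. `deg^in(v) ≤ 2·n`. -/
def simpleOk {V : Type*} (A : V → V → Prop) (v : V) (n : ℕ) : Prop :=
  (inNbr A v).ncard ≤ 2 * n

lemma subset_dClosure {V : Type*} (A : V → V → Prop) (ok : V → ℕ → Prop) (S : Set V) :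
    S ⊆ dClosure A ok S := by
  intro x hx T hT
  exact hT.1 hx

lemma dClosure_closed {V : Type*} [Fintype V] (A : V → V → Prop) (S : Set V) :
    ∀ v, simpleOk A v ((inNbr A v ∩ dClosure A (simpleOk A) S).ncard) →
      v ∈ dClosure A (simpleOk A) S := by
  intro v hv T hT
  apply hT.2
  have hsub : inNbr A v ∩ dClosure A (simpleOk A) S ⊆ inNbr A v ∩ T := by
    intro u hu
    exact ⟨hu.1, hu.2 T hT⟩
  have := Set.ncard_le_ncard hsub (Set.toFinite _)
  exact le_trans hv (by omega)

/-- seed set for an ordering f -/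
def seedSet {V : Type*} (A : V → V → Prop) (f : V → ℕ) : Set V :=
  {v | 2 * (inNbr A v ∩ {u | f u < f v}).ncard < (inNbr A v).ncard}

lemma dClosure_seedSet_eq_univ {V : Type*} [Fintype V] (A : V → V → Prop) (f : V → ℕ) :
    dClosure A (simpleOk A) (seedSet A f) = Set.univ := by
  have hCdef : True := trivial
  have key : ∀ n : ℕ, ∀ v : V, f v < n → v ∈ dClosure A (simpleOk A) (seedSet A f) := by
    intro n
    induction n with
    | zero => intro v hv; omega
    | succ n ih =>
      intro v hv
      by_cases hvS : v ∈ seedSet A f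
      · exact subset_dClosure A _ _ hvS
      · have hd : (inNbr A v).ncard ≤ 2 * (inNbr A v ∩ {u | f u < f v}).ncard := by
          simp only [seedSet, Set.mem_setOf_eq, not_lt] at hvS
          exact hvS
        apply dClosure_closed A (seedSet A f) v
        have hsub : inNbr A v ∩ {u | f u < f v} ⊆ inNbr A v ∩ dClosure A (simpleOk A) (seedSet A f) := by
          intro u hu
          exact ⟨hu.1, ih u (by have := hu.2; simp only [Set.mem_setOf_eq] at this; omega)⟩
        have := Set.ncard_le_ncard hsub (Set.toFinite _)
        exact le_trans hd (by omega)
  ext v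
  simp only [Set.mem_univ, iff_true]
  exact key (f v + 1) v (Nat.lt_succ_self _)

/-- Theorem: every finite digraph with positive indegrees has an irreversible
dynamo of size at most `⌊|V|/2⌋` under the simple-majority scenario. -/
theorem stmt3 {V : Type*} [Fintype V] (A : V → V → Prop)
    (hsimple : ∀ v, ¬ A v v) (hindeg : ∀ v : V, ∃ u, A u v) :
    ∃ S : Set V, dClosure A (simpleOk A) S = Set.univ ∧
      S.ncard ≤ Fintype.card V / 2 := by
  classical
  set n := Fintype.card V with hn
  set e := Fintype.equivFin V with he
  set f : V → ℕ := fun v => (e v : ℕ) with hf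
  set g : V → ℕ := fun v => n - (e v : ℕ) with hg
  have hfn : ∀ v, f v < n := fun v => (e v).2
  -- reversed order
  have hrev : ∀ u v : V, g u < g v ↔ f v < f u := by
    intro u v
    have h1 := hfn u; have h2 := hfn v
    simp only [hf, hg]
    omega
  -- the two seed sets are disjoint
  have hdisj : Disjoint (seedSet A f) (seedSet A g) := by
    rw [Set.disjoint_left]
    intro v h1 h2
    simp only [seedSet, Set.mem_setOf_eq] at h1 h2
    -- the two intersections partition inNbr A v
    have hpart : (inNbr A v ∩ {u | f u < f v}).ncard
        + (inNbr A v ∩ {u | g u < g v}).ncard = (inNbr A v).ncard := by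
      rw [← Set.ncard_union_eq ?hd (Set.toFinite _) (Set.toFinite _)]
      · congr 1
        ext u
        simp only [Set.mem_union, Set.mem_inter_iff, Set.mem_setOf_eq, hrev]
        constructor
        · rintro (h | h) <;> exact h.1
        · intro hu
          have hne : u ≠ v := by
            rintro rfl
            exact hsimple u hu
          have : f u ≠ f v := fun h => hne (e.injective (Fin.ext h))
          rcases lt_or_gt_of_ne this with h | h
          · exact Or.inl ⟨hu, h⟩
          · exact Or.inr ⟨hu, h⟩
      case hd =>
        rw [Set.disjoint_left]
        rintro u ⟨_, h1'⟩ ⟨_, h2'⟩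
        simp only [Set.mem_setOf_eq, hrev] at h1' h2'
        omega
    omega
  have hsum : (seedSet A f).ncard + (seedSet A g).ncard ≤ n := by
    rw [← Set.ncard_union_eq hdisj (Set.toFinite _) (Set.toFinite _)]
    have := Set.ncard_le_ncard (Set.subset_univ (seedSet A f ∪ seedSet A g)) (Set.toFinite _)
    rwa [Set.ncard_univ, Nat.card_eq_fintype_card, ← hn] at this
  by_cases hle : (seedSet A f).ncard ≤ (seedSet A g).ncard
  · exact ⟨seedSet A f, dClosure_seedSet_eq_univ A f, by omega⟩
  · exact ⟨seedSet A g, dClosure_seedSet_eq_univ A g, by omega⟩
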